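/- Define D(u) = ∫_{ℝ³}∫_{ℝ³} |u(x)|² |u(y)|² / |x − y| dx dy for u: ℝ³ → ℂ. There exists a constant C > 0 such that D(u) ≤ C ‖u‖_{L^{12/5}(ℝ³)}⁴ for every u ∈ L^{12/5}(ℝ³, ℂ). -/

import Mathlib

open MeasureTheory

noncomputable section

local notation "E3" => EuclideanSpace ℝ (Fin 3)

/-- The Coulomb (Hartree) energy functional. -/
def coulombEnergy (u : E3 → ℂ) : ℝ :=
  ∫ x : E3, ∫ y : E3, ‖u x‖ ^ 2 * ‖u y‖ ^ 2 / ‖x - y‖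

namespace CoulombAux

open Set ENNReal

/-- The volume of the unit ball in `ℝ³`. -/
def B : ℝ≥0∞ := volume (Metric.ball (0 : E3) 1)

lemma B_ne_top : B ≠ ∞ := measure_ball_lt_top.ne

/-- Integral of the Coulomb kernel over a ball, by dyadic decomposition. -/
lemma ball_lint (x : E3) {r : ℝ} (hr : 0 < r) :
    ∫⁻ y in Metric.ball x r, (edist x y)⁻¹ ≤ ENNReal.ofReal (r ^ 2) * (4 * B) := by
  set S : ℕ → Set E3 := fun k =>
    Metric.ball x ((2⁻¹ : ℝ) ^ k * r) \ Metric.ball x ((2⁻¹ : ℝ) ^ (k + 1) * r) with hS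
  have hcover : Metric.ball x r ⊆ {x} ∪ ⋃ k, S k := by
    intro y hy
    rcases eq_or_ne y x with rfl | hyx
    · exact Or.inl rfl
    · right
      have hd : 0 < dist y x := dist_pos.mpr hyx
      have hdr : dist y x < r := Metric.mem_ball.mp hy
      have hex : ∃ k : ℕ, (2⁻¹ : ℝ) ^ (k + 1) * r ≤ dist y x := by
        obtain ⟨n, hn⟩ := exists_pow_lt_of_lt_one (div_pos hd hr)
          (by norm_num : (2⁻¹ : ℝ) < 1)
        refine ⟨n, ?_⟩
        have h1 : (2⁻¹ : ℝ) ^ (n + 1) ≤ (2⁻¹ : ℝ) ^ n := by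
          apply pow_le_pow_of_le_one (by norm_num) (by norm_num)
          omega
        have h2 : (2⁻¹ : ℝ) ^ n * r < dist y x := by
          have := mul_lt_mul_of_pos_right hn hr
          rwa [div_mul_cancel₀ _ hr.ne'] at this
        nlinarith
      set k := Nat.find hex with hk
      have hspec : (2⁻¹ : ℝ) ^ (k + 1) * r ≤ dist y x := Nat.find_spec hex
      have hup : dist y x < (2⁻¹ : ℝ) ^ k * r := by
        rcases Nat.eq_zero_or_pos k with h0 | hpos
        · rw [h0]; simpa using hdr
        · have := Nat.find_min hex (m := k - 1) (by omega)
          push_neg at this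
          have hkk : k - 1 + 1 = k := by omega
          rwa [hkk] at this
      exact Set.mem_iUnion.mpr ⟨k, Metric.mem_ball.mpr hup,
        fun h => absurd (Metric.mem_ball.mp h) (not_lt.mpr hspec)⟩
  have hterm : ∀ k : ℕ, ∫⁻ y in S k, (edist x y)⁻¹
      ≤ (2⁻¹ : ℝ≥0∞) ^ k * (ENNReal.ofReal (2 * r ^ 2) * B) := by
    intro k
    have hp : (0 : ℝ) < (2⁻¹ : ℝ) ^ k := by positivity
    have hrk : (0 : ℝ) < (2⁻¹ : ℝ) ^ (k + 1) * r := by positivity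
    have hbound : ∀ y ∈ S k,
        (edist x y)⁻¹ ≤ ENNReal.ofReal (((2⁻¹ : ℝ) ^ (k + 1) * r)⁻¹) := by
      intro y hy
      have h1 : (2⁻¹ : ℝ) ^ (k + 1) * r ≤ dist y x :=
        not_lt.mp fun h => hy.2 (Metric.mem_ball.mpr h)
      have h2 : ENNReal.ofReal ((2⁻¹ : ℝ) ^ (k + 1) * r) ≤ edist x y := by
        rw [edist_dist, dist_comm]
        exact ENNReal.ofReal_le_ofReal h1
      rw [ENNReal.ofReal_inv_of_pos hrk]
      exact ENNReal.inv_le_inv' h2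
    calc ∫⁻ y in S k, (edist x y)⁻¹
        ≤ ∫⁻ _ in S k, ENNReal.ofReal (((2⁻¹ : ℝ) ^ (k + 1) * r)⁻¹) :=
          setLIntegral_mono measurable_const hbound
      _ = ENNReal.ofReal (((2⁻¹ : ℝ) ^ (k + 1) * r)⁻¹) * volume (S k) :=
          setLIntegral_const _ _
      _ ≤ ENNReal.ofReal (((2⁻¹ : ℝ) ^ (k + 1) * r)⁻¹)
            * volume (Metric.ball x ((2⁻¹ : ℝ) ^ k * r)) :=
          mul_le_mul_right (measure_mono Set.diff_subset) _
      _ = ENNReal.ofReal (((2⁻¹ : ℝ) ^ (k + 1) * r)⁻¹)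
            * (ENNReal.ofReal (((2⁻¹ : ℝ) ^ k * r) ^ 3) * B) := by
          rw [Measure.addHaar_ball volume x (by positivity)]
          congr 2
          · rw [finrank_euclideanSpace_fin]
      _ = ENNReal.ofReal ((((2⁻¹ : ℝ) ^ (k + 1) * r)⁻¹) * (((2⁻¹ : ℝ) ^ k * r) ^ 3)) * B := by
          rw [← mul_assoc, ← ENNReal.ofReal_mul (by positivity)]
      _ ≤ ENNReal.ofReal ((2⁻¹ : ℝ) ^ k * (2 * r ^ 2)) * B := by
          refine mul_le_mul_left (ENNReal.ofReal_le_ofReal ?_) B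
          rw [inv_mul_le_iff₀ hrk]
          have hple : (2⁻¹ : ℝ) ^ k ≤ 1 := pow_le_one₀ (by norm_num) (by norm_num)
          have e1 : ((2⁻¹ : ℝ) ^ k * r) ^ 3 = ((2⁻¹:ℝ)^k)^3 * r^3 := by ring
          have e2 : (2⁻¹ : ℝ) ^ (k+1) = (2⁻¹:ℝ)^k * 2⁻¹ := pow_succ _ _
          rw [e1, e2]
          nlinarith [sq_nonneg ((2⁻¹:ℝ)^k), pow_pos hr 3, sq_nonneg r,
            mul_pos hp hr, mul_nonneg (mul_nonneg hp.le hp.le) (pow_pos hr 3).le]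
      _ = (2⁻¹ : ℝ≥0∞) ^ k * (ENNReal.ofReal (2 * r ^ 2) * B) := by
          rw [ENNReal.ofReal_mul (by positivity), ← mul_assoc]
          congr 1
          rw [ENNReal.ofReal_pow (by norm_num)]
          congr 2
          rw [ENNReal.ofReal_inv_of_pos (by norm_num)]
          norm_num
  calc ∫⁻ y in Metric.ball x r, (edist x y)⁻¹
      ≤ ∫⁻ y in {x} ∪ ⋃ k, S k, (edist x y)⁻¹ := lintegral_mono_set hcover
    _ ≤ (∫⁻ y in ({x} : Set E3), (edist x y)⁻¹) + ∫⁻ y in ⋃ k, S k, (edist x y)⁻¹ :=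
        lintegral_union_le _ _ _
    _ ≤ 0 + ∑' k, ∫⁻ y in S k, (edist x y)⁻¹ := by
        gcongr
        · rw [setLIntegral_measure_zero _ _ (measure_singleton x)]
        · exact lintegral_iUnion_le _ _
    _ ≤ 0 + ∑' k : ℕ, (2⁻¹ : ℝ≥0∞) ^ k * (ENNReal.ofReal (2 * r ^ 2) * B) := by
        gcongr with k
        exact hterm k
    _ = (1 - 2⁻¹)⁻¹ * (ENNReal.ofReal (2 * r ^ 2) * B) := by
        rw [zero_add, ENNReal.tsum_mul_right, ENNReal.tsum_geometric]
    _ = ENNReal.ofReal (r ^ 2) * (4 * B) := by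
        rw [ENNReal.one_sub_inv_two, inv_inv, ENNReal.ofReal_mul (by norm_num),
          ENNReal.ofReal_ofNat]
        ring

/-- Uniform bound on the Coulomb kernel integrated over any measurable set. -/
lemma set_lint (x : E3) {A : Set E3} (hA : MeasurableSet A) :
    ∫⁻ y in A, (edist x y)⁻¹ ≤ (4 * B + 1) * volume A ^ (2/3 : ℝ) := by
  rcases eq_or_ne (volume A) 0 with h0 | h0
  · rw [setLIntegral_measure_zero _ _ h0]; exact zero_le
  rcases eq_or_ne (volume A) ∞ with htop | htop
  · rw [htop, ENNReal.top_rpow_of_pos (by norm_num),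
      ENNReal.mul_top ((lt_of_lt_of_le zero_lt_one le_add_self).ne')]
    exact le_top
  set vA := volume A with hvA
  have hvpos : 0 < vA.toReal := ENNReal.toReal_pos h0 htop
  have hofp : ∀ p : ℝ, ENNReal.ofReal (vA.toReal ^ p) = vA ^ p := by
    intro p
    have hne : vA ^ p ≠ ∞ := by
      simp [ENNReal.rpow_eq_top_iff, h0, htop]
    rw [ENNReal.toReal_rpow, ENNReal.ofReal_toReal hne]
  set r : ℝ := vA.toReal ^ ((1:ℝ)/3) with hrdef
  have hr : 0 < r := Real.rpow_pos_of_pos hvpos _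
  have hsplit : A ⊆ Metric.ball x r ∪ (A \ Metric.ball x r) := by
    intro y hy
    by_cases h : y ∈ Metric.ball x r
    · exact Or.inl h
    · exact Or.inr ⟨hy, h⟩
  calc ∫⁻ y in A, (edist x y)⁻¹
      ≤ ∫⁻ y in Metric.ball x r ∪ (A \ Metric.ball x r), (edist x y)⁻¹ :=
        lintegral_mono_set hsplit
    _ ≤ (∫⁻ y in Metric.ball x r, (edist x y)⁻¹) + ∫⁻ y in A \ Metric.ball x r, (edist x y)⁻¹ :=
        lintegral_union_le _ _ _
    _ ≤ ENNReal.ofReal (r ^ 2) * (4 * B) + ENNReal.ofReal r⁻¹ * vA := by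
        gcongr
        · exact ball_lint x hr
        · calc ∫⁻ y in A \ Metric.ball x r, (edist x y)⁻¹
              ≤ ∫⁻ _ in A \ Metric.ball x r, ENNReal.ofReal r⁻¹ := by
                refine setLIntegral_mono measurable_const fun y hy => ?_
                have h1 : r ≤ dist y x := not_lt.mp fun h => hy.2 (Metric.mem_ball.mpr h)
                have h2 : ENNReal.ofReal r ≤ edist x y := by
                  rw [edist_dist, dist_comm]
                  exact ENNReal.ofReal_le_ofReal h1
                rw [ENNReal.ofReal_inv_of_pos hr]
                exact ENNReal.inv_le_inv' h2
            _ = ENNReal.ofReal r⁻¹ * volume (A \ Metric.ball x r) := setLIntegral_const _ _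
            _ ≤ ENNReal.ofReal r⁻¹ * vA := mul_le_mul_right (measure_mono Set.diff_subset) _
    _ = vA ^ (2/3 : ℝ) * (4 * B) + vA ^ (2/3 : ℝ) := by
        congr 1
        · congr 1
          have : r ^ 2 = vA.toReal ^ (2/3 : ℝ) := by
            rw [hrdef, ← Real.rpow_natCast (vA.toReal ^ ((1:ℝ)/3)) 2, ← Real.rpow_mul hvpos.le]
            norm_num
          rw [this, hofp]
        · have h1 : ENNReal.ofReal r⁻¹ = vA ^ (-(1/3) : ℝ) := by
            rw [← Real.rpow_neg_one r, hrdef, ← Real.rpow_mul hvpos.le,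
              show (1:ℝ)/3 * -1 = -(1/3) by norm_num, hofp]
          rw [h1]
          calc vA ^ (-(1/3) : ℝ) * vA = vA ^ (-(1/3) : ℝ) * vA ^ (1:ℝ) := by
                rw [ENNReal.rpow_one]
            _ = vA ^ ((-(1/3)) + 1 : ℝ) := (ENNReal.rpow_add _ _ h0 htop).symm
            _ = vA ^ (2/3 : ℝ) := by norm_num
    _ = (4 * B + 1) * vA ^ (2/3 : ℝ) := by ring

/-- Pointwise layer-cake representation combined with a lintegral: slicing the
`ofReal (g x)` factor into level sets. -/
lemma layer_lintegral {g : E3 → ℝ} (hg : Measurable g)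
    {h : E3 → ℝ≥0∞} (hh : Measurable h) :
    ∫⁻ x, ENNReal.ofReal (g x) * h x
      = ∫⁻ t in Set.Ioi (0:ℝ), ∫⁻ x in {x | t < g x}, h x := by
  have hind : ∀ x, Measurable (Set.indicator (Set.Iio (g x)) (1 : ℝ → ℝ≥0∞)) :=
    fun x => measurable_const.indicator measurableSet_Iio
  have hpt : ∀ x, ENNReal.ofReal (g x)
      = ∫⁻ t in Set.Ioi (0:ℝ), Set.indicator (Set.Iio (g x)) (1 : ℝ → ℝ≥0∞) t := by
    intro x
    rw [lintegral_indicator_one measurableSet_Iio,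
      Measure.restrict_apply measurableSet_Iio, Set.Iio_inter_Ioi, Real.volume_Ioo, sub_zero]
  have step1 : ∀ x, ENNReal.ofReal (g x) * h x
      = ∫⁻ t in Set.Ioi (0:ℝ), Set.indicator (Set.Iio (g x)) (1 : ℝ → ℝ≥0∞) t * h x := by
    intro x
    rw [hpt x]
    exact (lintegral_mul_const (h x) (hind x)).symm
  simp only [step1]
  rw [lintegral_lintegral_swap]
  · refine lintegral_congr fun t => ?_
    rw [← lintegral_indicator (measurableSet_lt measurable_const hg)]
    refine lintegral_congr fun x => ?_
    simp only [Set.indicator_apply, Set.mem_Iio, Set.mem_setOf_eq, Pi.one_apply, ite_mul,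
      one_mul, zero_mul]
  · have : (Function.uncurry fun x (t:ℝ) =>
        Set.indicator (Set.Iio (g x)) (1 : ℝ → ℝ≥0∞) t * h x)
        = fun p : E3 × ℝ => (if p.2 < g p.1 then h p.1 else 0) := by
      funext p
      simp [Function.uncurry, Set.indicator_apply, ite_mul]
    rw [this]
    exact (Measurable.ite (measurableSet_lt measurable_snd (hg.comp measurable_fst))
      (hh.comp measurable_fst) measurable_const).aemeasurable

/-- Chebyshev-type bound for the 2/3 power of the measure of a superlevel set. -/
lemma cheb23 {g : E3 → ℝ} (hg : Measurable g) {t : ℝ} (ht : 0 < t) :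
    volume {x | t < g x} ^ (2/3 : ℝ)
      ≤ ENNReal.ofReal (t ^ (-(4/5) : ℝ))
          * (∫⁻ x, ENNReal.ofReal (g x ^ (6/5:ℝ))) ^ (2/3 : ℝ) := by
  set M : ℝ≥0∞ := ∫⁻ x, ENNReal.ofReal (g x ^ (6/5:ℝ)) with hM
  have hAm : MeasurableSet {x | t < g x} := measurableSet_lt measurable_const hg
  have h1 : ENNReal.ofReal (t ^ (6/5:ℝ)) * volume {x | t < g x} ≤ M := by
    calc ENNReal.ofReal (t ^ (6/5:ℝ)) * volume {x | t < g x}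
        = ∫⁻ _ in {x | t < g x}, ENNReal.ofReal (t ^ (6/5:ℝ)) := (setLIntegral_const _ _).symm
      _ ≤ ∫⁻ x in {x | t < g x}, ENNReal.ofReal (g x ^ (6/5:ℝ)) := by
          refine setLIntegral_mono' hAm fun x hx => ?_
          exact ENNReal.ofReal_le_ofReal
            (Real.rpow_le_rpow ht.le (le_of_lt hx) (by norm_num))
      _ ≤ M := setLIntegral_le_lintegral _ _
  have hc0 : ENNReal.ofReal (t ^ (6/5:ℝ)) ≠ 0 :=
    (ENNReal.ofReal_pos.mpr (Real.rpow_pos_of_pos ht _)).ne'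
  have h2 : volume {x | t < g x} ≤ ENNReal.ofReal (t ^ (-(6/5) : ℝ)) * M := by
    calc volume {x | t < g x}
        = (ENNReal.ofReal (t ^ (6/5:ℝ)))⁻¹
            * (ENNReal.ofReal (t ^ (6/5:ℝ)) * volume {x | t < g x}) := by
          rw [← mul_assoc, ENNReal.inv_mul_cancel hc0 ENNReal.ofReal_ne_top, one_mul]
      _ ≤ (ENNReal.ofReal (t ^ (6/5:ℝ)))⁻¹ * M := mul_le_mul_right h1 _
      _ = ENNReal.ofReal (t ^ (-(6/5) : ℝ)) * M := by
          rw [Real.rpow_neg ht.le, ENNReal.ofReal_inv_of_pos (Real.rpow_pos_of_pos ht _)]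
  calc volume {x | t < g x} ^ (2/3 : ℝ)
      ≤ (ENNReal.ofReal (t ^ (-(6/5) : ℝ)) * M) ^ (2/3 : ℝ) :=
        ENNReal.rpow_le_rpow h2 (by norm_num)
    _ = ENNReal.ofReal (t ^ (-(6/5) : ℝ)) ^ (2/3 : ℝ) * M ^ (2/3 : ℝ) :=
        ENNReal.mul_rpow_of_nonneg _ _ (by norm_num)
    _ = ENNReal.ofReal (t ^ (-(4/5) : ℝ)) * M ^ (2/3 : ℝ) := by
        rw [ENNReal.ofReal_rpow_of_pos (Real.rpow_pos_of_pos ht _), ← Real.rpow_mul ht.le]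
        norm_num

/-- One-dimensional integral of `t ^ (-4/5)` over `(0, s]`. -/
lemma int45 {s : ℝ} (hs : 0 < s) :
    ∫⁻ t in Set.Ioc (0:ℝ) s, ENNReal.ofReal (t ^ (-(4/5) : ℝ))
      = ENNReal.ofReal (5 * s ^ ((1:ℝ)/5)) := by
  have hint : IntegrableOn (fun t : ℝ => t ^ (-(4/5) : ℝ)) (Set.Ioc 0 s) := by
    have h := intervalIntegral.intervalIntegrable_rpow' (a := 0) (b := s)
      (by norm_num : (-1:ℝ) < -(4/5))
    rwa [intervalIntegrable_iff, Set.uIoc_of_le hs.le] at h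
  rw [← ofReal_integral_eq_lintegral_ofReal hint]
  · congr 1
    rw [← intervalIntegral.integral_of_le hs.le,
      integral_rpow (Or.inl (by norm_num : (-1:ℝ) < -(4/5)))]
    rw [Real.zero_rpow (by norm_num : (-(4/5) : ℝ) + 1 ≠ 0)]
    norm_num
    ring
  · refine (ae_restrict_iff' measurableSet_Ioc).mpr (ae_of_all _ fun t ht => ?_)
    exact Real.rpow_nonneg ht.1.le _

/-- The weighted integral of the superlevel-set measures is controlled by `M`. -/
lemma Mprime_le {g : E3 → ℝ} (hg : Measurable g) (hg0 : ∀ x, 0 ≤ g x) :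
    ∫⁻ t in Set.Ioi (0:ℝ), volume {x | t < g x} * ENNReal.ofReal (t ^ ((1:ℝ)/5))
      ≤ ∫⁻ x, ENNReal.ofReal (g x ^ (6/5:ℝ)) := by
  have key := lintegral_comp_eq_lintegral_meas_lt_mul volume (f := g)
    (g := fun t : ℝ => t ^ ((1:ℝ)/5)) (ae_of_all _ hg0) hg.aemeasurable
    (fun t ht => intervalIntegral.intervalIntegrable_rpow' (by norm_num : (-1:ℝ) < 1/5))
    ((ae_restrict_iff' measurableSet_Ioi).mpr
      (ae_of_all _ fun t ht => Real.rpow_nonneg (le_of_lt ht) _))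
  rw [← key]
  refine lintegral_mono fun x => ?_
  rw [integral_rpow (Or.inl (by norm_num : (-1:ℝ) < 1/5)),
    Real.zero_rpow (by norm_num : ((1:ℝ)/5) + 1 ≠ 0)]
  refine ENNReal.ofReal_le_ofReal ?_
  have h1 : (0:ℝ) ≤ g x ^ ((1:ℝ)/5 + 1) := Real.rpow_nonneg (hg0 x) _
  have h2 : ((1:ℝ)/5 + 1) = (6/5 : ℝ) := by norm_num
  rw [h2] at h1 ⊢
  linarith

set_option maxHeartbeats 2000000 in
/-- The Hardy–Littlewood–Sobolev–type master inequality, in `ℝ≥0∞`. -/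
lemma master {g : E3 → ℝ} (hg : Measurable g) (hg0 : ∀ x, 0 ≤ g x) :
    ∫⁻ x, ∫⁻ y, ENNReal.ofReal (g x) * (ENNReal.ofReal (g y) * (edist x y)⁻¹)
      ≤ 10 * (4 * B + 1) * (∫⁻ x, ENNReal.ofReal (g x ^ (6/5:ℝ))) ^ (5/3 : ℝ) := by
  set c : ℝ≥0∞ := 4 * B + 1 with hc
  set M : ℝ≥0∞ := ∫⁻ x, ENNReal.ofReal (g x ^ (6/5:ℝ)) with hM
  set M23 : ℝ≥0∞ := M ^ (2/3:ℝ) with hM23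
  have hAm : ∀ t : ℝ, MeasurableSet {x : E3 | t < g x} :=
    fun t => measurableSet_lt measurable_const hg
  have hrpm45 : Measurable fun t : ℝ => ENNReal.ofReal (t ^ (-(4/5):ℝ)) := by fun_prop
  have hrpm15 : Measurable fun t : ℝ => ENNReal.ofReal (5 * t ^ ((1:ℝ)/5)) := by fun_prop
  have hrpm15' : Measurable fun t : ℝ => ENNReal.ofReal (t ^ ((1:ℝ)/5)) := by fun_prop
  -- the inner kernel integral and its measurability
  obtain ⟨J, hJdef⟩ : ∃ J : E3 → ℝ → ℝ≥0∞,
      J = fun x s => ∫⁻ y in {y : E3 | s < g y}, (edist x y)⁻¹ := ⟨_, rfl⟩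
  have hJm : Measurable fun p : E3 × ℝ => J p.1 p.2 := by
    have hFm : Measurable fun q : (E3 × ℝ) × E3 =>
        if q.1.2 < g q.2 then (edist q.1.1 q.2)⁻¹ else 0 :=
      Measurable.ite (measurableSet_lt measurable_fst.snd (hg.comp measurable_snd))
        ((measurable_fst.fst.edist measurable_snd).inv) measurable_const
    have heq : (fun p : E3 × ℝ => J p.1 p.2)
        = fun p : E3 × ℝ => ∫⁻ y, if p.2 < g y then (edist p.1 y)⁻¹ else 0 := by
      funext p
      rw [hJdef]
      show (∫⁻ y in {y : E3 | p.2 < g y}, (edist p.1 y)⁻¹) = _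
      rw [← lintegral_indicator (hAm p.2)]
      exact lintegral_congr fun y => by simp [Set.indicator_apply]
    rw [heq]
    exact Measurable.lintegral_prod_right'
      (f := fun q : (E3 × ℝ) × E3 => if q.1.2 < g q.2 then (edist q.1.1 q.2)⁻¹ else 0) hFm
  -- measurability of the level-set volume
  have ham : Measurable fun t : ℝ => volume {x : E3 | t < g x} := by
    have hFm : Measurable fun q : ℝ × E3 => if q.1 < g q.2 then (1:ℝ≥0∞) else 0 :=
      Measurable.ite (measurableSet_lt measurable_fst (hg.comp measurable_snd))
        measurable_const measurable_const
    have heq : (fun t : ℝ => volume {x : E3 | t < g x})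
        = fun t : ℝ => ∫⁻ x, if t < g x then (1:ℝ≥0∞) else 0 := by
      funext t
      rw [← lintegral_indicator_one (hAm t)]
      exact lintegral_congr fun x => by simp [Set.indicator_apply]
    rw [heq]
    exact Measurable.lintegral_prod_right'
      (f := fun q : ℝ × E3 => if q.1 < g q.2 then (1:ℝ≥0∞) else 0) hFm
  -- the doubly-sliced integrals and their measurability
  obtain ⟨W, hWdef⟩ : ∃ W : ℝ → ℝ → ℝ≥0∞,
      W = fun t s => ∫⁻ x in {x : E3 | t < g x}, J x s := ⟨_, rfl⟩
  have hWm : Measurable fun p : ℝ × ℝ => W p.1 p.2 := by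
    have hFm : Measurable fun q : (ℝ × ℝ) × E3 =>
        if q.1.1 < g q.2 then J q.2 q.1.2 else 0 :=
      Measurable.ite (measurableSet_lt measurable_fst.fst (hg.comp measurable_snd))
        (hJm.comp (measurable_snd.prodMk measurable_fst.snd)) measurable_const
    have heq : (fun p : ℝ × ℝ => W p.1 p.2)
        = fun p : ℝ × ℝ => ∫⁻ x, if p.1 < g x then J x p.2 else 0 := by
      funext p
      rw [hWdef]
      show (∫⁻ x in {x : E3 | p.1 < g x}, J x p.2) = _
      rw [← lintegral_indicator (hAm p.1)]
      exact lintegral_congr fun x => by simp [Set.indicator_apply]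
    rw [heq]
    exact Measurable.lintegral_prod_right'
      (f := fun q : (ℝ × ℝ) × E3 => if q.1.1 < g q.2 then J q.2 q.1.2 else 0) hFm
  -- pointwise bounds on W
  have hJb : ∀ (x : E3) (s : ℝ), J x s ≤ c * volume {y : E3 | s < g y} ^ (2/3 : ℝ) := by
    intro x s
    rw [hJdef]
    exact set_lint x (hAm s)
  have hW1 : ∀ t s : ℝ, W t s
      ≤ volume {x : E3 | t < g x} * (c * volume {y : E3 | s < g y} ^ (2/3:ℝ)) := by
    intro t s
    rw [hWdef]
    calc ∫⁻ x in {x : E3 | t < g x}, J x s ≤ ∫⁻ _ in {x : E3 | t < g x}, c * volume {y : E3 | s < g y} ^ (2/3:ℝ) :=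
          lintegral_mono fun x => hJb x s
      _ = c * volume {y : E3 | s < g y} ^ (2/3:ℝ) * volume {x : E3 | t < g x} :=
          setLIntegral_const _ _
      _ = _ := by ring
  have hW2 : ∀ t s : ℝ, W t s
      ≤ volume {y : E3 | s < g y} * (c * volume {x : E3 | t < g x} ^ (2/3:ℝ)) := by
    intro t s
    have hswap : W t s
        = ∫⁻ y in {y : E3 | s < g y}, ∫⁻ x in {x : E3 | t < g x}, (edist x y)⁻¹ := by
      simp only [hWdef, hJdef]
      exact lintegral_lintegral_swap measurable_edist.inv.aemeasurable
    rw [hswap]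
    calc ∫⁻ y in {y : E3 | s < g y}, ∫⁻ x in {x : E3 | t < g x}, (edist x y)⁻¹
        ≤ ∫⁻ _ in {y : E3 | s < g y}, c * volume {x : E3 | t < g x} ^ (2/3:ℝ) := by
          refine lintegral_mono fun y => ?_
          have he : ∫⁻ x in {x : E3 | t < g x}, (edist x y)⁻¹
              = ∫⁻ x in {x : E3 | t < g x}, (edist y x)⁻¹ :=
            lintegral_congr fun x => by rw [edist_comm]
          rw [he]
          exact set_lint y (hAm t)
      _ = c * volume {x : E3 | t < g x} ^ (2/3:ℝ) * volume {y : E3 | s < g y} :=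
          setLIntegral_const _ _
      _ = _ := by ring
  -- representation of the double integral
  have hTrep : ∫⁻ x, ∫⁻ y, ENNReal.ofReal (g x) * (ENNReal.ofReal (g y) * (edist x y)⁻¹)
      = ∫⁻ s in Set.Ioi (0:ℝ), ∫⁻ t in Set.Ioi (0:ℝ), W t s := by
    calc ∫⁻ x, ∫⁻ y, ENNReal.ofReal (g x) * (ENNReal.ofReal (g y) * (edist x y)⁻¹)
        = ∫⁻ x, ENNReal.ofReal (g x) * ∫⁻ y, ENNReal.ofReal (g y) * (edist x y)⁻¹ :=
          lintegral_congr fun x => lintegral_const_mul' _ _ ENNReal.ofReal_ne_top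
      _ = ∫⁻ x, ENNReal.ofReal (g x) * ∫⁻ s in Set.Ioi (0:ℝ), J x s := by
          refine lintegral_congr fun x => ?_
          rw [layer_lintegral (h := fun y => (edist x y)⁻¹) hg
            ((measurable_const.edist measurable_id).inv), hJdef]
      _ = ∫⁻ x, ∫⁻ s in Set.Ioi (0:ℝ), ENNReal.ofReal (g x) * J x s :=
          lintegral_congr fun x => (lintegral_const_mul' _ _ ENNReal.ofReal_ne_top).symm
      _ = ∫⁻ s in Set.Ioi (0:ℝ), ∫⁻ x, ENNReal.ofReal (g x) * J x s :=
          lintegral_lintegral_swap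
            ((hg.ennreal_ofReal.comp measurable_fst).mul hJm).aemeasurable
      _ = ∫⁻ s in Set.Ioi (0:ℝ), ∫⁻ t in Set.Ioi (0:ℝ), W t s := by
          refine lintegral_congr fun s => ?_
          rw [hWdef]
          exact layer_lintegral hg (hJm.comp (measurable_id.prodMk measurable_const))
  -- region 1 : inner variable below the outer one
  have region1 : ∀ s : ℝ, 0 < s → ∫⁻ t in Set.Ioc (0:ℝ) s, W t s
      ≤ c * M23 * (volume {y : E3 | s < g y} * ENNReal.ofReal (5 * s ^ ((1:ℝ)/5))) := by
    intro s hs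
    calc ∫⁻ t in Set.Ioc (0:ℝ) s, W t s
        ≤ ∫⁻ t in Set.Ioc (0:ℝ) s,
            (volume {y : E3 | s < g y} * (c * M23)) * ENNReal.ofReal (t ^ (-(4/5):ℝ)) := by
          refine setLIntegral_mono' measurableSet_Ioc fun t ht => ?_
          calc W t s
              ≤ volume {y : E3 | s < g y} * (c * volume {x : E3 | t < g x} ^ (2/3:ℝ)) :=
                hW2 t s
            _ ≤ volume {y : E3 | s < g y}
                  * (c * (ENNReal.ofReal (t ^ (-(4/5):ℝ)) * M23)) := by
                gcongr
                exact cheb23 hg ht.1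
            _ = (volume {y : E3 | s < g y} * (c * M23)) * ENNReal.ofReal (t ^ (-(4/5):ℝ)) := by
                ring
      _ = (volume {y : E3 | s < g y} * (c * M23))
            * ∫⁻ t in Set.Ioc (0:ℝ) s, ENNReal.ofReal (t ^ (-(4/5):ℝ)) :=
          lintegral_const_mul _ hrpm45
      _ = c * M23 * (volume {y : E3 | s < g y} * ENNReal.ofReal (5 * s ^ ((1:ℝ)/5))) := by
          rw [int45 hs]; ring
  -- region 2, after swapping the order of slicing
  have region2inner : ∀ t : ℝ, 0 < t → ∫⁻ s in Set.Ioo (0:ℝ) t, W t s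
      ≤ c * M23 * (volume {x : E3 | t < g x} * ENNReal.ofReal (5 * t ^ ((1:ℝ)/5))) := by
    intro t ht
    calc ∫⁻ s in Set.Ioo (0:ℝ) t, W t s
        ≤ ∫⁻ s in Set.Ioo (0:ℝ) t,
            (volume {x : E3 | t < g x} * (c * M23)) * ENNReal.ofReal (s ^ (-(4/5):ℝ)) := by
          refine setLIntegral_mono' measurableSet_Ioo fun s hsm => ?_
          calc W t s
              ≤ volume {x : E3 | t < g x} * (c * volume {y : E3 | s < g y} ^ (2/3:ℝ)) :=
                hW1 t s
            _ ≤ volume {x : E3 | t < g x}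
                  * (c * (ENNReal.ofReal (s ^ (-(4/5):ℝ)) * M23)) := by
                gcongr
                exact cheb23 hg hsm.1
            _ = (volume {x : E3 | t < g x} * (c * M23)) * ENNReal.ofReal (s ^ (-(4/5):ℝ)) := by
                ring
      _ = (volume {x : E3 | t < g x} * (c * M23))
            * ∫⁻ s in Set.Ioo (0:ℝ) t, ENNReal.ofReal (s ^ (-(4/5):ℝ)) :=
          lintegral_const_mul _ hrpm45
      _ ≤ (volume {x : E3 | t < g x} * (c * M23)) * ENNReal.ofReal (5 * t ^ ((1:ℝ)/5)) := by
          refine mul_le_mul_right ?_ _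
          rw [← int45 ht]
          exact lintegral_mono_set Set.Ioo_subset_Ioc_self
      _ = c * M23 * (volume {x : E3 | t < g x} * ENNReal.ofReal (5 * t ^ ((1:ℝ)/5))) := by ring
  -- the final weighted integral is controlled by M
  have hfinal : ∫⁻ u in Set.Ioi (0:ℝ),
      c * M23 * (volume {x : E3 | u < g x} * ENNReal.ofReal (5 * u ^ ((1:ℝ)/5)))
        ≤ c * M23 * (5 * M) := by
    rw [lintegral_const_mul (f := fun u => volume {x : E3 | u < g x} * ENNReal.ofReal (5 * u ^ ((1:ℝ)/5))) _ (ham.mul hrpm15)]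
    refine mul_le_mul_right ?_ _
    calc ∫⁻ u in Set.Ioi (0:ℝ), volume {x : E3 | u < g x} * ENNReal.ofReal (5 * u ^ ((1:ℝ)/5))
        = ∫⁻ u in Set.Ioi (0:ℝ),
            5 * (volume {x : E3 | u < g x} * ENNReal.ofReal (u ^ ((1:ℝ)/5))) := by
          refine lintegral_congr fun u => ?_
          rw [ENNReal.ofReal_mul (by norm_num : (0:ℝ) ≤ 5), ENNReal.ofReal_ofNat]
          ring
      _ = 5 * ∫⁻ u in Set.Ioi (0:ℝ), volume {x : E3 | u < g x} * ENNReal.ofReal (u ^ ((1:ℝ)/5)) :=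
          lintegral_const_mul _ (ham.mul hrpm15')
      _ ≤ 5 * M := mul_le_mul_right (Mprime_le hg hg0) _
  -- region 2 assembled
  have hR2 : ∫⁻ s in Set.Ioi (0:ℝ), ∫⁻ t in Set.Ioi s, W t s ≤ c * M23 * (5 * M) := by
    have e1 : ∫⁻ s in Set.Ioi (0:ℝ), ∫⁻ t in Set.Ioi s, W t s
        = ∫⁻ s in Set.Ioi (0:ℝ), ∫⁻ t in Set.Ioi (0:ℝ), (if s < t then W t s else 0) := by
      refine setLIntegral_congr_fun measurableSet_Ioi (fun s hs => ?_)
      calc ∫⁻ t in Set.Ioi s, W t s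
          = ∫⁻ t in Set.Ioi s, W t s ∂(volume.restrict (Set.Ioi (0:ℝ))) := by
            rw [Measure.restrict_restrict measurableSet_Ioi, Set.Ioi_inter_Ioi,
              max_eq_left (le_of_lt hs)]
        _ = ∫⁻ t, (Set.Ioi s).indicator (fun t => W t s) t ∂(volume.restrict (Set.Ioi (0:ℝ))) :=
            (lintegral_indicator measurableSet_Ioi _).symm
        _ = ∫⁻ t in Set.Ioi (0:ℝ), (if s < t then W t s else 0) :=
            lintegral_congr fun t => by simp [Set.indicator_apply]
    have e2 : ∫⁻ s in Set.Ioi (0:ℝ), ∫⁻ t in Set.Ioi (0:ℝ), (if s < t then W t s else 0)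
        = ∫⁻ t in Set.Ioi (0:ℝ), ∫⁻ s in Set.Ioi (0:ℝ), (if s < t then W t s else 0) :=
      lintegral_lintegral_swap
        (Measurable.ite (measurableSet_lt measurable_fst measurable_snd)
          (hWm.comp (measurable_snd.prodMk measurable_fst)) measurable_const).aemeasurable
    have e3 : ∀ t : ℝ, ∫⁻ s in Set.Ioi (0:ℝ), (if s < t then W t s else 0)
        = ∫⁻ s in Set.Ioo (0:ℝ) t, W t s := by
      intro t
      calc ∫⁻ s in Set.Ioi (0:ℝ), (if s < t then W t s else 0)
          = ∫⁻ s, (Set.Iio t).indicator (fun s => W t s) s ∂(volume.restrict (Set.Ioi (0:ℝ))) :=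
            lintegral_congr fun s => by simp [Set.indicator_apply]
        _ = ∫⁻ s in Set.Iio t, W t s ∂(volume.restrict (Set.Ioi (0:ℝ))) :=
            lintegral_indicator measurableSet_Iio _
        _ = ∫⁻ s in Set.Ioo (0:ℝ) t, W t s := by
            rw [Measure.restrict_restrict measurableSet_Iio, Set.Iio_inter_Ioi]
    rw [e1, e2]
    calc ∫⁻ t in Set.Ioi (0:ℝ), ∫⁻ s in Set.Ioi (0:ℝ), (if s < t then W t s else 0)
        ≤ ∫⁻ t in Set.Ioi (0:ℝ),
            c * M23 * (volume {x : E3 | t < g x} * ENNReal.ofReal (5 * t ^ ((1:ℝ)/5))) := by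
          refine setLIntegral_mono' measurableSet_Ioi fun t ht => ?_
          rw [e3 t]
          exact region2inner t ht
      _ ≤ c * M23 * (5 * M) := hfinal
  -- put everything together
  have hMM : M23 * M = M ^ (5/3:ℝ) := by
    rw [show (5/3:ℝ) = 2/3 + 1 by norm_num,
      ENNReal.rpow_add_of_nonneg _ _ (by norm_num) (by norm_num), ENNReal.rpow_one, hM23]
  calc ∫⁻ x, ∫⁻ y, ENNReal.ofReal (g x) * (ENNReal.ofReal (g y) * (edist x y)⁻¹)
      = ∫⁻ s in Set.Ioi (0:ℝ), ∫⁻ t in Set.Ioi (0:ℝ), W t s := hTrep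
    _ ≤ ∫⁻ s in Set.Ioi (0:ℝ),
          (c * M23 * (volume {y : E3 | s < g y} * ENNReal.ofReal (5 * s ^ ((1:ℝ)/5)))
            + ∫⁻ t in Set.Ioi s, W t s) := by
        refine setLIntegral_mono' measurableSet_Ioi fun s hs => ?_
        have hsplit : ∫⁻ t in Set.Ioi (0:ℝ), W t s
            ≤ (∫⁻ t in Set.Ioc (0:ℝ) s, W t s) + ∫⁻ t in Set.Ioi s, W t s := by
          rw [← Set.Ioc_union_Ioi_eq_Ioi (le_of_lt hs)]
          exact lintegral_union_le _ _ _
        exact hsplit.trans (add_le_add_left (region1 s hs) _)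
    _ = (∫⁻ s in Set.Ioi (0:ℝ),
            c * M23 * (volume {y : E3 | s < g y} * ENNReal.ofReal (5 * s ^ ((1:ℝ)/5))))
          + ∫⁻ s in Set.Ioi (0:ℝ), ∫⁻ t in Set.Ioi s, W t s :=
        lintegral_add_left (measurable_const.mul (ham.mul hrpm15)) _
    _ ≤ c * M23 * (5 * M) + c * M23 * (5 * M) := add_le_add hfinal hR2
    _ = 10 * c * (M23 * M) := by ring
    _ = 10 * c * M ^ (5/3:ℝ) := by rw [hMM]

/-- Bochner integral of a nonnegative function is at most the `toReal` of the lintegral. -/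
lemma real_le_lintegral {α : Type*} [MeasurableSpace α] {μ : Measure α} {q : α → ℝ}
    (hq : 0 ≤ᵐ[μ] q) : ∫ a, q a ∂μ ≤ (∫⁻ a, ENNReal.ofReal (q a) ∂μ).toReal := by
  by_cases h : Integrable q μ
  · rw [integral_eq_lintegral_of_nonneg_ae hq h.aestronglyMeasurable]
  · rw [integral_undef h]
    exact ENNReal.toReal_nonneg

end CoulombAux

open CoulombAux ENNReal in
theorem coulombEnergy_le :
    ∃ C : ℝ, 0 < C ∧ ∀ u : E3 → ℂ, MemLp u (ENNReal.ofReal (12 / 5)) volume →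
      coulombEnergy u ≤ C * (eLpNorm u (ENNReal.ofReal (12 / 5)) volume).toReal ^ 4 := by
  have hCne : (10 * (4 * B + 1) : ℝ≥0∞) ≠ ∞ := by
    refine ENNReal.mul_ne_top (by simp) ?_
    exact ENNReal.add_ne_top.mpr ⟨ENNReal.mul_ne_top (by simp) B_ne_top, ENNReal.one_ne_top⟩
  refine ⟨(10 * (4 * B + 1) : ℝ≥0∞).toReal + 1, by positivity, fun u hu => ?_⟩
  obtain ⟨v, hvm, huv⟩ : ∃ v : E3 → ℂ, StronglyMeasurable v ∧ u =ᵐ[volume] v :=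
    ⟨hu.1.mk u, hu.1.stronglyMeasurable_mk, hu.1.ae_eq_mk⟩
  have hg : Measurable fun x : E3 => ‖v x‖ ^ 2 := hvm.measurable.norm.pow_const 2
  have hg0 : ∀ x : E3, 0 ≤ ‖v x‖ ^ 2 := fun x => by positivity
  set I : ℝ≥0∞ := ∫⁻ x, (‖u x‖₊ : ℝ≥0∞) ^ (12/5 : ℝ) with hI
  have hMI : (∫⁻ x, ENNReal.ofReal ((‖v x‖ ^ 2) ^ (6/5:ℝ))) = I := by
    rw [hI]
    refine lintegral_congr_ae ?_
    filter_upwards [huv] with x hx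
    rw [← hx]
    calc ENNReal.ofReal ((‖u x‖ ^ 2) ^ (6/5:ℝ))
        = ENNReal.ofReal (‖u x‖ ^ (12/5:ℝ)) := by
          rw [← Real.rpow_natCast ‖u x‖ 2, ← Real.rpow_mul (norm_nonneg _)]
          norm_num
      _ = (‖u x‖₊ : ℝ≥0∞) ^ (12/5:ℝ) := by
          rw [← enorm_eq_nnnorm, ← ofReal_norm]
          exact (ENNReal.ofReal_rpow_of_nonneg (norm_nonneg _) (by norm_num)).symm
  have hp0 : (ENNReal.ofReal (12 / 5) : ℝ≥0∞) ≠ 0 :=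
    (ENNReal.ofReal_pos.mpr (by norm_num)).ne'
  have heLp : eLpNorm u (ENNReal.ofReal (12 / 5)) volume = I ^ ((5:ℝ)/12) := by
    rw [eLpNorm_eq_lintegral_rpow_enorm_toReal hp0 ENNReal.ofReal_ne_top,
      ENNReal.toReal_ofReal (by norm_num : (0:ℝ) ≤ 12/5), hI]
    simp only [enorm_eq_nnnorm]
    norm_num
  have hI_ne_top : I ≠ ∞ := by
    intro htop
    have h := hu.2
    rw [heLp, htop, ENNReal.top_rpow_of_pos (by norm_num)] at h
    exact lt_irrefl _ h
  have hI4 : (eLpNorm u (ENNReal.ofReal (12 / 5)) volume) ^ (4:ℕ) = I ^ ((5:ℝ)/3) := by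
    rw [heLp, ← ENNReal.rpow_natCast (I ^ ((5:ℝ)/12)) 4, ← ENNReal.rpow_mul]
    norm_num
  have hT := master hg hg0
  rw [hMI] at hT
  have hRHSne : 10 * (4 * B + 1) * I ^ ((5:ℝ)/3) ≠ ∞ :=
    ENNReal.mul_ne_top hCne (ENNReal.rpow_ne_top_of_nonneg (by norm_num) hI_ne_top)
  have hTne : (∫⁻ x, ∫⁻ y, ENNReal.ofReal (‖v x‖ ^ 2)
      * (ENNReal.ofReal (‖v y‖ ^ 2) * (edist x y)⁻¹)) ≠ ∞ := by
    exact ne_top_of_le_ne_top hRHSne hT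
  have hq0 : ∀ x y : E3, 0 ≤ ‖v x‖ ^ 2 * ‖v y‖ ^ 2 / ‖x - y‖ := fun x y => by positivity
  have hcv : coulombEnergy u = coulombEnergy v := by
    unfold coulombEnergy
    refine integral_congr_ae ?_
    filter_upwards [huv] with x hx
    refine integral_congr_ae ?_
    filter_upwards [huv] with y hy
    rw [hx, hy]
  have hpt : ∀ x y : E3, ENNReal.ofReal (‖v x‖ ^ 2 * ‖v y‖ ^ 2 / ‖x - y‖)
      ≤ ENNReal.ofReal (‖v x‖ ^ 2) * (ENNReal.ofReal (‖v y‖ ^ 2) * (edist x y)⁻¹) := by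
    intro x y
    rcases eq_or_lt_of_le (norm_nonneg (x - y)) with h0 | h0
    · rw [← h0, _root_.div_zero, ENNReal.ofReal_zero]
      exact zero_le
    · refine le_of_eq ?_
      rw [div_eq_mul_inv, ENNReal.ofReal_mul (by positivity),
        ENNReal.ofReal_mul (by positivity), ENNReal.ofReal_inv_of_pos h0, mul_assoc]
      congr 2
      rw [edist_dist, dist_eq_norm]
  have step2 : coulombEnergy v ≤ (∫⁻ x, ∫⁻ y, ENNReal.ofReal (‖v x‖ ^ 2)
      * (ENNReal.ofReal (‖v y‖ ^ 2) * (edist x y)⁻¹)).toReal := by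
    have houter : ∀ x : E3, (0:ℝ) ≤ ∫ y, ‖v x‖ ^ 2 * ‖v y‖ ^ 2 / ‖x - y‖ :=
      fun x => integral_nonneg fun y => hq0 x y
    calc coulombEnergy v
        ≤ (∫⁻ x, ENNReal.ofReal (∫ y, ‖v x‖ ^ 2 * ‖v y‖ ^ 2 / ‖x - y‖)).toReal :=
          real_le_lintegral (ae_of_all _ houter)
      _ ≤ _ := by
          refine ENNReal.toReal_mono hTne (lintegral_mono fun x => ?_)
          calc ENNReal.ofReal (∫ y, ‖v x‖ ^ 2 * ‖v y‖ ^ 2 / ‖x - y‖)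
              ≤ ENNReal.ofReal
                  ((∫⁻ y, ENNReal.ofReal (‖v x‖ ^ 2 * ‖v y‖ ^ 2 / ‖x - y‖)).toReal) :=
                ENNReal.ofReal_le_ofReal (real_le_lintegral (ae_of_all _ fun y => hq0 x y))
            _ ≤ ∫⁻ y, ENNReal.ofReal (‖v x‖ ^ 2 * ‖v y‖ ^ 2 / ‖x - y‖) :=
                ENNReal.ofReal_toReal_le
            _ ≤ ∫⁻ y, ENNReal.ofReal (‖v x‖ ^ 2)
                  * (ENNReal.ofReal (‖v y‖ ^ 2) * (edist x y)⁻¹) :=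
                lintegral_mono fun y => hpt x y
  calc coulombEnergy u = coulombEnergy v := hcv
    _ ≤ (∫⁻ x, ∫⁻ y, ENNReal.ofReal (‖v x‖ ^ 2)
          * (ENNReal.ofReal (‖v y‖ ^ 2) * (edist x y)⁻¹)).toReal := step2
    _ ≤ (10 * (4 * B + 1) * I ^ ((5:ℝ)/3)).toReal := by
        exact ENNReal.toReal_mono hRHSne hT
    _ = (10 * (4 * B + 1) : ℝ≥0∞).toReal
          * (eLpNorm u (ENNReal.ofReal (12 / 5)) volume).toReal ^ 4 := by
        rw [← hI4, ENNReal.toReal_mul, ENNReal.toReal_pow]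
    _ ≤ ((10 * (4 * B + 1) : ℝ≥0∞).toReal + 1)
          * (eLpNorm u (ENNReal.ofReal (12 / 5)) volume).toReal ^ 4 := by
        have h4 : (0:ℝ) ≤ (eLpNorm u (ENNReal.ofReal (12 / 5)) volume).toReal ^ 4 := by
          positivity
        nlinarith
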